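/- Let 2 ≤ k ≤ n−1, let J be any k-element subset of {1,…,n}, and let L = {ℓ_1 < ℓ_2 < ⋯ < ℓ_d} ⊆ {1,…,n} with 1 ≤ d ≤ k−1. Then in 𝔅^{(L)}: (∂_{ℓ_1} ∘ ∂_{ℓ_2} ∘ ⋯ ∘ ∂_{ℓ_d})(𝓛_J) = 𝓛^{(L)}_{J∖L} if L ⊆ J, and (∂_{ℓ_1} ∘ ⋯ ∘ ∂_{ℓ_d})(𝓛_J) = 0 if L ⊄ J. -/

import Mathlib

open Finset

/-- Cyclic successor in `Fin n`. -/
def csucc {n : ℕ} (x : Fin n) : Fin n :=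
  ⟨(x.val + 1) % n, Nat.mod_lt _ (Nat.lt_of_le_of_lt (Nat.zero_le _) x.isLt)⟩

/-- Cyclic predecessor in `Fin n`. -/
def cpred {n : ℕ} (x : Fin n) : Fin n :=
  ⟨(x.val + (n - 1)) % n, Nat.mod_lt _ (Nat.lt_of_le_of_lt (Nat.zero_le _) x.isLt)⟩

/-- The cyclic interval `[i, j]` in `Fin n`. -/
def cInterval {n : ℕ} (i j : Fin n) : Finset (Fin n) :=
  univ.filter fun x => (x - i).val ≤ (j - i).val

/-- `K` is frozen in `S` if its elements are consecutive in the cyclic order induced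
on `S` from `(1,2,…,n)`, i.e. `K` is the intersection of `S` with a cyclic interval. -/
def FrozenIn {n : ℕ} (S K : Finset (Fin n)) : Prop :=
  ∃ i j : Fin n, K = S ∩ cInterval i j

instance {n : ℕ} (S K : Finset (Fin n)) : Decidable (FrozenIn S K) :=
  inferInstanceAs (Decidable (∃ i j : Fin n, K = S ∩ cInterval i j))

/-- The first element of `K` met when reading `j, j+1, j+2, …` cyclically
(`j` itself if `j ∈ K`); junk value `j` if `K = ∅`. -/
def nextIn {n : ℕ} (K : Finset (Fin n)) (j : Fin n) : Fin n :=
  if h : (univ.filter fun r : Fin n => j + r ∈ K).Nonempty then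
    j + (univ.filter fun r : Fin n => j + r ∈ K).min' h
  else j

/-- The cyclic predecessor of `x` in `S`: the first element of `S` met when reading
`x−1, x−2, …` cyclically; junk value `x` if `S = ∅`. -/
def prevIn {n : ℕ} (S : Finset (Fin n)) (x : Fin n) : Fin n :=
  if h : (univ.filter fun r : Fin n => cpred x - r ∈ S).Nonempty then
    cpred x - (univ.filter fun r : Fin n => cpred x - r ∈ S).min' h
  else x

/-- `∂_j(K) = K ∖ {ℓ}`, where `ℓ = j` if `j ∈ K` and otherwise `ℓ` is the first
element of `K` met when reading `j+1, j+2, …` cyclically. -/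
def bdSet {n : ℕ} (j : Fin n) (K : Finset (Fin n)) : Finset (Fin n) :=
  K.erase (nextIn K j)

/-- The basis vector `β^{(L)}_K` of the space `𝔅^{(L)}` of formal linear
combinations (modelled inside `ℝ^{Finset (Fin n)}`): the indicator of `K` if `K`
is nonfrozen in `S = {1,…,n} ∖ L`, and `0` if `K` is frozen. -/
noncomputable def betaV {n : ℕ} (L K : Finset (Fin n)) : Finset (Fin n) → ℝ :=
  if FrozenIn ((univ : Finset (Fin n)) \ L) K then 0 else Pi.single K 1

/-- The `S`-initial points of `K`: elements of `K` whose cyclic predecessor in `S`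
does not lie in `K`. -/
def initPts {n : ℕ} (S K : Finset (Fin n)) : Finset (Fin n) :=
  K.filter fun i => prevIn S i ∉ K

/-- `𝓛^{(L)}_K = Σ_{M ∈ {0,1}^t} (−1)^{1+|M|} β^{(L)}_{K_M}`, where `K_M` replaces the
chosen `S`-initial points of `K` by their cyclic predecessors in `S = {1,…,n} ∖ L`. -/
noncomputable def LElt {n : ℕ} (L K : Finset (Fin n)) : Finset (Fin n) → ℝ :=
  ∑ T ∈ (initPts ((univ : Finset (Fin n)) \ L) K).powerset,
    ((-1 : ℝ) ^ (1 + T.card)) •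
      betaV L ((K \ T) ∪ T.image (prevIn ((univ : Finset (Fin n)) \ L)))

/-- The boundary map `∂_j : 𝔅^{(L)} → 𝔅^{(L∪{j})}`, the linear extension of
`β^{(L)}_K ↦ β^{(L∪{j})}_{∂_j(K)}`. -/
noncomputable def bdMap {n : ℕ} (L : Finset (Fin n)) (j : Fin n)
    (x : Finset (Fin n) → ℝ) : Finset (Fin n) → ℝ :=
  ∑ K : Finset (Fin n), x K • betaV (insert j L) (bdSet j K)

/-- Iterated boundary maps: `bdComp L [j₁, …, jd] x` applies `∂_{j₁}` first (starting
from `𝔅^{(L)}`), then `∂_{j₂}`, etc. -/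
noncomputable def bdComp {n : ℕ} :
    Finset (Fin n) → List (Fin n) → (Finset (Fin n) → ℝ) → (Finset (Fin n) → ℝ)
  | _, [], x => x
  | L0, j :: js, x => bdComp (insert j L0) js (bdMap L0 j x)

section Aux
variable {n : ℕ}

lemma dist_lt (a b : Fin n) : (a - b).val < n := (a-b).isLt

lemma dist_add_or (a b c : Fin n) :
    (a - c).val = (a - b).val + (b - c).val ∨
    (a - c).val + n = (a - b).val + (b - c).val := by
  haveI : NeZero n := ⟨by have := a.pos; omega⟩
  have h : a - c = (a - b) + (b - c) := by abel
  have h2 : (a - c).val = ((a-b).val + (b-c).val) % n := by rw [h, Fin.add_def]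
  rcases Nat.lt_or_ge ((a-b).val + (b-c).val) n with hl | hl
  · left; rw [h2, Nat.mod_eq_of_lt hl]
  · right
    have hlt : (a-b).val + (b-c).val < 2*n := by
      have := dist_lt a b; have := dist_lt b c; omega
    rw [h2, Nat.mod_eq_sub_mod hl, Nat.mod_eq_of_lt (by omega)]
    omega

lemma dist_eq_zero_iff {a b : Fin n} : (a - b).val = 0 ↔ a = b := by
  haveI : NeZero n := ⟨by have := a.pos; omega⟩
  constructor
  · intro h
    have : a - b = 0 := Fin.ext (by simpa using h)
    exact sub_eq_zero.mp this
  · rintro rfl; simp [sub_self]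

lemma dist_self' (a : Fin n) : (a - a).val = 0 := dist_eq_zero_iff.mpr rfl

lemma dist_left_inj {a b c : Fin n} (h : (a - c).val = (b - c).val) : a = b := by
  haveI : NeZero n := ⟨by have := a.pos; omega⟩
  exact sub_left_injective (Fin.ext h)

lemma dist_antisymm {a b : Fin n} (hne : a ≠ b) : (a - b).val + (b - a).val = n := by
  rcases dist_add_or a b a with h | h
  · rw [dist_self'] at h
    exact absurd (dist_eq_zero_iff.mp (by omega)) hne
  · rw [dist_self'] at h; omega

lemma dpos {a b : Fin n} (hne : a ≠ b) : 0 < (a - b).val := by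
  rcases Nat.eq_zero_or_pos (a-b).val with h | h
  · exact absurd (dist_eq_zero_iff.mp h) hne
  · exact h

/-- `nextIn` spec. -/
lemma nextIn_mem_min {K : Finset (Fin n)} {j : Fin n} (hK : K.Nonempty) :
    nextIn K j ∈ K ∧ ∀ z ∈ K, (nextIn K j - j).val ≤ (z - j).val := by
  obtain ⟨y, hy⟩ := hK
  haveI : NeZero n := ⟨by have := j.pos; omega⟩
  have hmemf : (y - j) ∈ Finset.univ.filter (fun r : Fin n => j + r ∈ K) := by
    simp only [Finset.mem_filter, Finset.mem_univ, true_and]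
    simpa [add_sub_cancel] using hy
  have hne : (Finset.univ.filter fun r : Fin n => j + r ∈ K).Nonempty := ⟨_, hmemf⟩
  rw [nextIn, dif_pos hne]
  set F := Finset.univ.filter (fun r : Fin n => j + r ∈ K) with hF
  have hmin := F.min'_mem hne
  rw [Finset.mem_filter] at hmin
  constructor
  · exact hmin.2
  · intro z hz
    have hzf : (z - j) ∈ F := by
      simp only [hF, Finset.mem_filter, Finset.mem_univ, true_and]
      simpa [add_sub_cancel] using hz
    have h := F.min'_le _ hzf
    have heq : j + F.min' hne - j = F.min' hne := by abel
    rw [heq]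
    exact h

lemma nextIn_eq_of {K : Finset (Fin n)} {j y : Fin n} (hy : y ∈ K)
    (hmin : ∀ z ∈ K, (y - j).val ≤ (z - j).val) : nextIn K j = y := by
  obtain ⟨h1, h2⟩ := nextIn_mem_min (K := K) (j := j) ⟨y, hy⟩
  exact dist_left_inj (Nat.le_antisymm (h2 y hy) (hmin _ h1))

lemma nextIn_self {K : Finset (Fin n)} {j : Fin n} (hj : j ∈ K) : nextIn K j = j :=
  nextIn_eq_of hj (fun z _ => by rw [dist_self']; omega)

lemma cpred_eq [NeZero n] (x : Fin n) : cpred x = x - 1 := by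
  have hn : 0 < n := x.pos
  apply Fin.ext
  rw [Fin.sub_def, cpred]
  simp only [Fin.val_one']
  rcases Nat.lt_or_ge 1 n with h | h
  · rw [Nat.mod_eq_of_lt h, Nat.add_comm]
  · have hne : n = 1 := by omega
    subst hne
    simp
lemma neg_one_dist [NeZero n] (x : Fin n) : ((x - 1) - x).val = n - 1 := by
  have h2 : 1 < n ∨ n = 1 := by have := x.pos; omega
  rcases h2 with h2 | h2
  · have hne : x ≠ x - 1 := by
      intro h
      have : (x - (x-1)).val = 0 := by rw [← h]; exact dist_self' x
      rw [show x - (x-1) = 1 by abel] at this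
      rw [Fin.val_one', Nat.mod_eq_of_lt h2] at this
      omega
    have := dist_antisymm hne
    have h1 : (x - (x-1)).val = 1 := by
      rw [show x - (x-1) = 1 by abel, Fin.val_one', Nat.mod_eq_of_lt h2]
    omega
  · subst h2
    simp [Subsingleton.elim (x - 1 - x) 0]

lemma rho_eq [NeZero n] {x z : Fin n} (hzx : z ≠ x) :
    ((x - 1) - z).val = n - 1 - (z - x).val := by
  have h1 := neg_one_dist x
  have h2 := dist_antisymm hzx
  have h3 := dist_add_or (x-1) x z
  have := dist_lt (x-1) z
  have := dist_lt z x
  have := dpos hzx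
  omega

lemma prevIn_mem_max {S : Finset (Fin n)} {x : Fin n} (h : ∃ y ∈ S, y ≠ x) :
    prevIn S x ∈ S ∧ prevIn S x ≠ x ∧
      ∀ z ∈ S, z ≠ x → (z - x).val ≤ (prevIn S x - x).val := by
  obtain ⟨y, hyS, hyx⟩ := h
  haveI : NeZero n := ⟨by have := x.pos; omega⟩
  have hcp : cpred x = x - 1 := cpred_eq x
  have hmemf : ((x-1) - y) ∈ Finset.univ.filter (fun r : Fin n => cpred x - r ∈ S) := by
    simp only [Finset.mem_filter, Finset.mem_univ, true_and, hcp]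
    simpa [sub_sub_cancel] using hyS
  have hne : (Finset.univ.filter fun r : Fin n => cpred x - r ∈ S).Nonempty := ⟨_, hmemf⟩
  rw [prevIn, dif_pos hne]
  set F := Finset.univ.filter (fun r : Fin n => cpred x - r ∈ S) with hF
  have hmin := F.min'_mem hne
  rw [Finset.mem_filter] at hmin
  set p := cpred x - F.min' hne with hp
  have hr0 : (x - 1) - p = F.min' hne := by rw [hp, hcp]; abel
  have hpmem : p ∈ S := hmin.2
  -- p ≠ x
  have hylt : ((x-1) - y).val < n - 1 := by
    rw [rho_eq hyx]
    have := dpos hyx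
    have := dist_lt y x
    omega
  have hminle : ∀ z ∈ S, ((x-1) - p).val ≤ ((x-1) - z).val := by
    intro z hz
    have hzf : ((x-1) - z) ∈ F := by
      simp only [hF, Finset.mem_filter, Finset.mem_univ, true_and, hcp]
      simpa [sub_sub_cancel] using hz
    rw [hr0]
    exact F.min'_le _ hzf
  have hpx : p ≠ x := by
    intro hcontra
    have h1 := hminle y hyS
    rw [hcontra] at h1
    rw [neg_one_dist] at h1
    omega
  refine ⟨hpmem, hpx, ?_⟩
  intro z hz hzx
  have h1 := hminle z hz
  rw [rho_eq hzx, rho_eq hpx] at h1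
  have := dist_lt z x
  have := dist_lt p x
  have := dpos hpx
  have := dpos hzx
  omega

lemma prevIn_eq_of {S : Finset (Fin n)} {x y : Fin n} (hy : y ∈ S) (hyx : y ≠ x)
    (hmax : ∀ z ∈ S, z ≠ x → (z - x).val ≤ (y - x).val) : prevIn S x = y := by
  obtain ⟨h1, h2, h3⟩ := prevIn_mem_max ⟨y, hy, hyx⟩
  exact (dist_left_inj (Nat.le_antisymm (h3 y hy hyx) (hmax _ h1 h2))).symm

lemma prevIn_singleton (x : Fin n) : prevIn ({x} : Finset (Fin n)) x = x := by
  haveI : NeZero n := ⟨by have := x.pos; omega⟩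
  have hcp : cpred x = x - 1 := cpred_eq x
  have hmemf : ((x-1) - x) ∈ Finset.univ.filter (fun r : Fin n => cpred x - r ∈ ({x} : Finset (Fin n))) := by
    simp only [Finset.mem_filter, Finset.mem_univ, true_and, hcp]
    simp [sub_sub_cancel]
  have hne : (Finset.univ.filter fun r : Fin n => cpred x - r ∈ ({x} : Finset (Fin n))).Nonempty := ⟨_, hmemf⟩
  rw [prevIn, dif_pos hne]
  set F := Finset.univ.filter (fun r : Fin n => cpred x - r ∈ ({x} : Finset (Fin n))) with hF
  have hmin := F.min'_mem hne
  rw [Finset.mem_filter, Finset.mem_singleton] at hmin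
  exact hmin.2
lemma prevIn_mem {S : Finset (Fin n)} {x : Fin n} (h : S.Nonempty) : prevIn S x ∈ S := by
  obtain ⟨y, hy⟩ := h
  by_cases hyx : y = x
  · subst hyx
    by_cases h2 : ∃ z ∈ S, z ≠ y
    · exact (prevIn_mem_max h2).1
    · push_neg at h2
      have hS : S = {y} := by
        apply Finset.Subset.antisymm
        · intro z hz; simp [h2 z hz]
        · simp [hy]
      rw [hS, prevIn_singleton]; simp
  · exact (prevIn_mem_max ⟨y, hy, hyx⟩).1

lemma prevIn_erase {S : Finset (Fin n)} {x j : Fin n} (hjS : j ∈ S) (hjx : j ≠ x)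
    (hpj : prevIn S x ≠ j) : prevIn (S.erase j) x = prevIn S x := by
  obtain ⟨h1, h2, h3⟩ := prevIn_mem_max ⟨j, hjS, hjx⟩
  exact prevIn_eq_of (Finset.mem_erase.mpr ⟨hpj, h1⟩) h2
    (fun z hz hzx => h3 z (Finset.mem_of_mem_erase hz) hzx)

/-- If `z` lies strictly "before" `i` as seen from `j`, then `z` is at most the
`S`-predecessor of `i` as seen from `j`, and that predecessor lies strictly before `i`. -/
lemma prev_lt_of {S : Finset (Fin n)} {i j z : Fin n} (hjS : j ∈ S) (hji : j ≠ i)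
    (hz : z ∈ S) (hzi : z ≠ i) (h : (z - j).val < (i - j).val) :
    (z - j).val ≤ (prevIn S i - j).val ∧ (prevIn S i - j).val < (i - j).val := by
  obtain ⟨h1, h2, h3⟩ := prevIn_mem_max ⟨j, hjS, hji⟩
  set p := prevIn S i with hp
  have hmaxz := h3 z hz hzi
  have haij := dist_antisymm hji
  have h4 := dist_add_or z j i
  have h5 := dist_add_or p j i
  have := dist_lt z i
  have := dist_lt p i
  have := dist_lt z j
  have := dist_lt p j
  have := dist_lt i j
  have := dist_lt j i
  have := dpos h2
  have := dpos hzi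
  omega

/-- If `prevIn S s = j` then `s` is the cyclic successor:
every other element of `S` is at least as far from `j`. -/
lemma csucc_min {S : Finset (Fin n)} {s j : Fin n} (hjS : j ∈ S) (hsS : s ∈ S)
    (hsj : s ≠ j) (hps : prevIn S s = j) :
    ∀ z ∈ S, z ≠ j → (s - j).val ≤ (z - j).val := by
  intro z hz hzj
  by_contra hcon
  push_neg at hcon
  by_cases hzs : z = s
  · subst hzs; omega
  · have := (prev_lt_of hjS (Ne.symm hsj) hz hzs hcon).1
    rw [hps, dist_self'] at this
    have := dpos hzj
    omega

/-- Uniqueness of the cyclic successor. -/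
lemma succ_unique {S : Finset (Fin n)} {s s' j : Fin n} (hjS : j ∈ S) (hsS : s ∈ S)
    (hsj : s ≠ j) (hps : prevIn S s = j) (hs'S : s' ∈ S) (hs'j : s' ≠ j)
    (hps' : prevIn S s' = j) : s = s' := by
  have h1 := csucc_min hjS hsS hsj hps s' hs'S hs'j
  have h2 := csucc_min hjS hs'S hs'j hps' s hsS hsj
  exact dist_left_inj (Nat.le_antisymm h1 h2)

/-- Injectivity of `prevIn S` on `S` (given an auxiliary point `j ∈ S`). -/
lemma prev_inj {S : Finset (Fin n)} {i i' j : Fin n} (hjS : j ∈ S) (hiS : i ∈ S)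
    (hi'S : i' ∈ S) (hji : j ≠ i) (hji' : j ≠ i')
    (hpp : prevIn S i = prevIn S i') : i = i' := by
  obtain ⟨hw1, hw2, _⟩ := prevIn_mem_max ⟨j, hjS, hji⟩
  obtain ⟨hw1', hw2', _⟩ := prevIn_mem_max (x := i') ⟨j, hjS, hji'⟩
  exact succ_unique hw1 hiS (Ne.symm hw2) rfl hi'S (by rw [← hpp] at hw2'; exact Ne.symm hw2')
    hpp.symm

lemma prev_jump {S : Finset (Fin n)} {i j : Fin n} (hjS : j ∈ S) (hiS : i ∈ S)
    (hij : i ≠ j) (hpi : prevIn S i = j) (hz : ∃ z ∈ S, z ≠ i ∧ z ≠ j) :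
    prevIn (S.erase j) i = prevIn S j := by
  obtain ⟨hj1, hj2, hj3⟩ := prevIn_mem_max (x := j) ⟨i, hiS, hij⟩
  obtain ⟨hi1, hi2, hi3⟩ := prevIn_mem_max (x := i) ⟨j, hjS, Ne.symm hij⟩
  rw [hpi] at hi3
  set y := prevIn S j with hy
  -- y ≠ i
  have hyi : y ≠ i := by
    intro hcontra
    obtain ⟨z, hzS, hzi, hzj⟩ := hz
    have h1 := hj3 z hzS hzj
    rw [hcontra] at h1
    have h2 := hi3 z hzS hzi
    have h3 := dist_antisymm hij
    have h4 := dist_add_or z j i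
    have := dpos hzj
    have := dpos hzi
    have := dist_lt z i
    have := dist_lt z j
    have := dist_lt i j
    have := dist_lt j i
    omega
  apply prevIn_eq_of (Finset.mem_erase.mpr ⟨hj2, hj1⟩) hyi
  intro z hz' hzi
  obtain ⟨hzj, hzS⟩ := Finset.mem_erase.mp hz'
  have h1 := hj3 z hzS hzj
  have h2 := hi3 z hzS hzi
  have h2y := hi3 y hj1 hyi
  have h3 := dist_antisymm hij
  have h4 := dist_add_or z j i
  have h5 := dist_add_or y j i
  have := dpos hzj
  have := dpos hj2
  have := dpos hij
  have := dist_lt z i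
  have := dist_lt y i
  have := dist_lt z j
  have := dist_lt y j
  have := dist_lt j i
  have := dist_lt i j
  omega
lemma cInterval_self (i : Fin n) : cInterval i i = {i} := by
  ext x
  simp only [cInterval, Finset.mem_filter, Finset.mem_univ, true_and, Finset.mem_singleton,
    dist_self']
  rw [Nat.le_zero]
  exact dist_eq_zero_iff

lemma frozen_empty {S : Finset (Fin n)} {j : Fin n} (hj : j ∉ S) :
    FrozenIn S (∅ : Finset (Fin n)) := by
  refine ⟨j, j, ?_⟩
  rw [cInterval_self]
  ext x
  simp only [Finset.notMem_empty, Finset.mem_inter, Finset.mem_singleton, false_iff]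
  rintro ⟨hx, rfl⟩
  exact hj hx

lemma frozen_erase {S A : Finset (Fin n)} {j : Fin n} (h : FrozenIn S A) :
    FrozenIn (S.erase j) (A.erase j) := by
  obtain ⟨a, b, rfl⟩ := h
  refine ⟨a, b, ?_⟩
  ext x
  simp only [Finset.mem_erase, Finset.mem_inter]
  tauto

lemma frozen_norm {S A : Finset (Fin n)} (h : FrozenIn S A) (hne : A.Nonempty) :
    ∃ a b, a ∈ A ∧ b ∈ A ∧ (∀ z ∈ A, (z - a).val ≤ (b - a).val) ∧
      A = S ∩ cInterval a b := by
  obtain ⟨i0, j0, hA⟩ := h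
  -- choose a minimizing, b maximizing (· - i0).val over A
  obtain ⟨a, haA, hamin⟩ := A.exists_min_image (fun z => (z - i0).val) hne
  obtain ⟨b, hbA, hbmax⟩ := A.exists_max_image (fun z => (z - i0).val) hne
  have hin : ∀ z ∈ A, z ∈ S ∧ (z - i0).val ≤ (j0 - i0).val := by
    intro z hz
    rw [hA] at hz
    simp only [Finset.mem_inter, cInterval, Finset.mem_filter, Finset.mem_univ, true_and] at hz
    exact hz
  have hbound : ∀ z ∈ A, (z - a).val ≤ (b - a).val := by
    intro z hz
    have h1 := hamin z hz
    have h2 := hbmax z hz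
    have h3 := dist_add_or z a i0
    have h4 := dist_add_or b a i0
    have := dist_lt z a
    have := dist_lt b a
    have := dist_lt z i0
    have := dist_lt b i0
    have := dist_lt a i0
    omega
  refine ⟨a, b, haA, hbA, hbound, ?_⟩
  apply Finset.Subset.antisymm
  · intro z hz
    have := hin z hz
    simp only [Finset.mem_inter, cInterval, Finset.mem_filter, Finset.mem_univ, true_and]
    exact ⟨this.1, hbound z hz⟩
  · intro z hz
    simp only [Finset.mem_inter, cInterval, Finset.mem_filter, Finset.mem_univ, true_and] at hz
    obtain ⟨hzS, hzab⟩ := hz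
    rw [hA]
    simp only [Finset.mem_inter, cInterval, Finset.mem_filter, Finset.mem_univ, true_and]
    refine ⟨hzS, ?_⟩
    have h1 := hamin b hbA
    have h2 := (hin a haA).2
    have h3 := (hin b hbA).2
    have h4 := dist_add_or z a i0
    have h5 := dist_add_or b a i0
    have := dist_lt z a
    have := dist_lt b a
    have := dist_lt z i0
    have := dist_lt b i0
    have := dist_lt a i0
    omega

lemma frozen_bdSet {S A : Finset (Fin n)} {j : Fin n} (hjS : j ∈ S) (h : FrozenIn S A) :
    FrozenIn (S.erase j) (bdSet j A) := by
  rcases A.eq_empty_or_nonempty with rfl | hne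
  · rw [bdSet, Finset.erase_empty]
    exact frozen_empty (Finset.notMem_erase j S)
  by_cases hjA : j ∈ A
  · rw [bdSet, nextIn_self hjA]
    exact frozen_erase h
  obtain ⟨a, b, haA, hbA, hbound, hA⟩ := frozen_norm h hne
  have hAS : ∀ z ∈ A, z ∈ S := by
    intro z hz; rw [hA] at hz; exact (Finset.mem_inter.mp hz).1
  have hja : j ≠ a := fun hc => hjA (hc ▸ haA)
  have hjb' : ¬ ((j - a).val ≤ (b - a).val) := by
    intro hc
    apply hjA
    rw [hA]
    simp only [Finset.mem_inter, cInterval, Finset.mem_filter, Finset.mem_univ, true_and]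
    exact ⟨hjS, hc⟩
  -- nextIn A j = a
  have hnext : nextIn A j = a := by
    apply nextIn_eq_of haA
    intro z hz
    have h1 := hbound z hz
    have h4 := dist_add_or z j a
    have h5 := dist_antisymm hja
    have := dist_lt z a
    have := dist_lt z j
    have := dist_lt j a
    have := dist_lt a j
    have := dpos hja
    omega
  rw [bdSet, hnext]
  rcases (A.erase a).eq_empty_or_nonempty with he | hne2
  · rw [he]; exact frozen_empty (Finset.notMem_erase j S)
  -- a2 : minimal element of A.erase a measured from a
  obtain ⟨a2, ha2A, ha2min⟩ := (A.erase a).exists_min_image (fun z => (z - a).val) hne2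
  obtain ⟨ha2ne, ha2A'⟩ := Finset.mem_erase.mp ha2A
  have hbne : b ≠ a := by
    intro hc
    obtain ⟨w, hw⟩ := hne2
    obtain ⟨hwne, hwA⟩ := Finset.mem_erase.mp hw
    have := hbound w hwA
    rw [hc] at this
    have h0 := dist_self' a
    have : (w - a).val = 0 := by omega
    exact hwne (dist_eq_zero_iff.mp this)
  have hbA2 : b ∈ A.erase a := Finset.mem_erase.mpr ⟨hbne, hbA⟩
  refine ⟨a2, b, ?_⟩
  ext z
  simp only [Finset.mem_erase, Finset.mem_inter, cInterval, Finset.mem_filter,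
    Finset.mem_univ, true_and]
  constructor
  · rintro ⟨hza, hzA⟩
    have hzj : z ≠ j := fun hc => hjA (hc ▸ hzA)
    refine ⟨⟨hzj, hAS z hzA⟩, ?_⟩
    have h1 := ha2min z (Finset.mem_erase.mpr ⟨hza, hzA⟩)
    have h1b := ha2min b hbA2
    have h2 := hbound z hzA
    have h4 := dist_add_or z a2 a
    have h5 := dist_add_or b a2 a
    have := dist_lt z a2
    have := dist_lt b a2
    have := dist_lt z a
    have := dist_lt b a
    have := dist_lt a2 a
    have := dpos hza
    have := dpos ha2ne
    omega
  · rintro ⟨⟨hzj, hzS⟩, hz2⟩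
    have h1b := ha2min b hbA2
    have h5 := dist_add_or b a2 a
    have h4 := dist_add_or z a2 a
    have := dist_lt z a2
    have := dist_lt b a2
    have := dist_lt z a
    have := dist_lt b a
    have := dist_lt a2 a
    have := dpos ha2ne
    have hzab : (z - a).val ≤ (b - a).val := by omega
    have hzA : z ∈ A := by
      rw [hA]
      simp only [Finset.mem_inter, cInterval, Finset.mem_filter, Finset.mem_univ, true_and]
      exact ⟨hzS, hzab⟩
    refine ⟨?_, hzA⟩
    intro hc
    subst hc
    have h6 := dist_antisymm ha2ne
    omega
lemma compl_insert (L : Finset (Fin n)) (j : Fin n) :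
    (Finset.univ \ insert j L : Finset (Fin n)) = (Finset.univ \ L).erase j := by
  ext x
  simp only [Finset.mem_sdiff, Finset.mem_insert, Finset.mem_erase, Finset.mem_univ, true_and]
  tauto

lemma betaV_frozen {L K : Finset (Fin n)} (h : FrozenIn (Finset.univ \ L) K) :
    betaV L K = 0 := if_pos h

lemma bdMap_apply (L : Finset (Fin n)) (j : Fin n) (x : Finset (Fin n) → ℝ)
    (A : Finset (Fin n)) :
    bdMap L j x A = ∑ K : Finset (Fin n), x K * betaV (insert j L) (bdSet j K) A := by
  simp [bdMap, Finset.sum_apply, Pi.smul_apply, smul_eq_mul]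

lemma bdMap_beta (L : Finset (Fin n)) (j : Fin n) (hjL : j ∉ L) (A : Finset (Fin n)) :
    bdMap L j (betaV L A) = betaV (insert j L) (bdSet j A) := by
  by_cases h : FrozenIn (Finset.univ \ L) A
  · have h2 : FrozenIn (Finset.univ \ insert j L) (bdSet j A) := by
      rw [compl_insert]
      exact frozen_bdSet (by simp [Finset.mem_sdiff, hjL]) h
    rw [betaV_frozen h, betaV_frozen h2]
    funext B
    rw [bdMap_apply]
    simp
  · funext B
    rw [bdMap_apply]
    rw [Finset.sum_eq_single A]
    · rw [betaV, if_neg h, Pi.single_eq_same, one_mul]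
    · intro K _ hKA
      rw [betaV, if_neg h, Pi.single_eq_of_ne hKA, zero_mul]
    · intro hA
      exact absurd (Finset.mem_univ A) hA

lemma bdMap_sum {ι : Type*} (L : Finset (Fin n)) (j : Fin n) (P : Finset ι)
    (f : ι → Finset (Fin n) → ℝ) :
    bdMap L j (∑ t ∈ P, f t) = ∑ t ∈ P, bdMap L j (f t) := by
  funext A
  rw [bdMap_apply, Finset.sum_apply]
  have : ∀ K : Finset (Fin n), (∑ t ∈ P, f t) K = ∑ t ∈ P, f t K := by
    intro K; rw [Finset.sum_apply]
  simp_rw [this, Finset.sum_mul]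
  rw [Finset.sum_comm]
  apply Finset.sum_congr rfl
  intro t _
  rw [bdMap_apply]

lemma bdMap_smul (L : Finset (Fin n)) (j : Fin n) (c : ℝ) (x : Finset (Fin n) → ℝ) :
    bdMap L j (c • x) = c • bdMap L j x := by
  funext A
  rw [bdMap_apply, Pi.smul_apply, bdMap_apply, smul_eq_mul, Finset.mul_sum]
  apply Finset.sum_congr rfl
  intro K _
  simp [mul_assoc]

lemma bdMap_zero (L : Finset (Fin n)) (j : Fin n) : bdMap L j (0 : Finset (Fin n) → ℝ) = 0 := by
  funext A
  rw [bdMap_apply]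
  simp

/-- Abbreviation for the shifted set `K_T`. -/
def KT (S K T : Finset (Fin n)) : Finset (Fin n) := (K \ T) ∪ T.image (prevIn S)

lemma bdMap_LElt (L : Finset (Fin n)) (j : Fin n) (hjL : j ∉ L) (K : Finset (Fin n)) :
    bdMap L j (LElt L K) =
      ∑ T ∈ (initPts (Finset.univ \ L) K).powerset,
        ((-1 : ℝ) ^ (1 + T.card)) •
          betaV (insert j L) (bdSet j (KT (Finset.univ \ L) K T)) := by
  rw [LElt, bdMap_sum]
  apply Finset.sum_congr rfl
  intro T _
  rw [bdMap_smul, bdMap_beta L j hjL]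
  rfl
lemma mem_initPts {S K : Finset (Fin n)} {i : Fin n} :
    i ∈ initPts S K ↔ i ∈ K ∧ prevIn S i ∉ K := Finset.mem_filter

lemma mem_KT {S K T : Finset (Fin n)} {z : Fin n} :
    z ∈ KT S K T ↔ (z ∈ K ∧ z ∉ T) ∨ ∃ i ∈ T, prevIn S i = z := by
  simp [KT, Finset.mem_union, Finset.mem_sdiff, Finset.mem_image]

lemma nextIn_KT {S K T : Finset (Fin n)} {j m : Fin n} (hKS : K ⊆ S) (hjS : j ∈ S)
    (hT : T ⊆ initPts S K) (hmK : m ∈ K) (hjm : j ≠ m)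
    (hmin : ∀ z ∈ K, z ≠ j → (m - j).val ≤ (z - j).val)
    (hjKT : j ∈ K → j ∈ T) :
    nextIn (KT S K T) j = if m ∈ T then prevIn S m else m := by
  have hTK : ∀ i ∈ T, i ∈ K ∧ prevIn S i ∉ K := fun i hi => mem_initPts.mp (hT hi)
  -- c1 : if prevIn S i = j for i ∈ T then i = m
  have c1 : ∀ i ∈ T, prevIn S i = j → i = m := by
    intro i hi hpij
    have hiK := (hTK i hi).1
    have hij : i ≠ j := by
      intro hc
      subst hc
      have := (prevIn_mem_max (x := i) ⟨m, hKS hmK, fun hc2 => hjm hc2.symm⟩).2.1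
      exact this hpij
    have h1 := csucc_min hjS (hKS hiK) hij hpij m (hKS hmK) (fun hc => hjm hc.symm)
    have h2 := hmin i hiK hij
    exact dist_left_inj (Nat.le_antisymm h1 h2)
  -- c2 : for i ∈ T with i ≠ m, (m - j).val ≤ (prevIn S i - j).val
  have c2 : ∀ i ∈ T, i ≠ m → (m - j).val ≤ (prevIn S i - j).val := by
    intro i hi him
    by_cases hij : i = j
    · subst hij
      exact (prevIn_mem_max (x := i) ⟨m, hKS hmK, fun hc => hjm hc.symm⟩).2.2 m (hKS hmK)
        (fun hc => hjm hc.symm)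
    · have hiK := (hTK i hi).1
      have hlt : (m - j).val < (i - j).val := by
        have h1 := hmin i hiK hij
        rcases Nat.lt_or_ge (m-j).val (i-j).val with h | h
        · exact h
        · exact absurd (dist_left_inj (Nat.le_antisymm h1 h)) (fun hc => him hc.symm)
      exact (prev_lt_of hjS (fun hc => hij hc.symm) (hKS hmK) (fun hc => him hc.symm) hlt).1
  by_cases hmT : m ∈ T
  · rw [if_pos hmT]
    have c3 : (prevIn S m - j).val < (m - j).val := by
      have h0 : (j - j).val < (m - j).val := by
        rw [dist_self']
        exact dpos (fun hc => hjm hc.symm)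
      exact (prev_lt_of hjS hjm hjS hjm h0).2
    apply nextIn_eq_of (mem_KT.mpr (Or.inr ⟨m, hmT, rfl⟩))
    intro z hz
    rcases mem_KT.mp hz with ⟨hzK, hzT⟩ | ⟨i, hiT, rfl⟩
    · have hzj : z ≠ j := by
        intro hc; subst hc; exact hzT (hjKT hzK)
      have := hmin z hzK hzj
      omega
    · by_cases him : i = m
      · subst him; omega
      · have := c2 i hiT him
        omega
  · rw [if_neg hmT]
    apply nextIn_eq_of (mem_KT.mpr (Or.inl ⟨hmK, hmT⟩))
    intro z hz
    rcases mem_KT.mp hz with ⟨hzK, hzT⟩ | ⟨i, hiT, rfl⟩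
    · have hzj : z ≠ j := by
        intro hc; subst hc; exact hzT (hjKT hzK)
      exact hmin z hzK hzj
    · have him : i ≠ m := fun hc => hmT (hc ▸ hiT)
      exact c2 i hiT him

lemma KT_erase_j {S K T : Finset (Fin n)} {j : Fin n} (hjT : j ∉ T) (_hjK : j ∈ K)
    (hpj : ∀ i ∈ T, prevIn S i ≠ j)
    (hpp : ∀ i ∈ T, prevIn (S.erase j) i = prevIn S i) :
    (KT S K T).erase j = KT (S.erase j) (K.erase j) T := by
  ext z
  simp only [Finset.mem_erase, mem_KT]
  constructor
  · rintro ⟨hzj, ⟨hzK, hzT⟩ | ⟨i, hiT, rfl⟩⟩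
    · exact Or.inl ⟨⟨hzj, hzK⟩, hzT⟩
    · exact Or.inr ⟨i, hiT, hpp i hiT⟩
  · rintro (⟨hzK', hzT⟩ | ⟨i, hiT, rfl⟩)
    · obtain ⟨hzj, hzK⟩ := hzK'
      exact ⟨hzj, Or.inl ⟨hzK, hzT⟩⟩
    · rw [hpp i hiT]
      exact ⟨hpj i hiT, Or.inr ⟨i, hiT, rfl⟩⟩

lemma KT_B2 {S K T : Finset (Fin n)} {j s : Fin n} (hjT : j ∈ T) (hsK : s ∈ K)
    (hsj : s ≠ j) (hsT : s ∉ T)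
    (hps' : prevIn (S.erase j) s = prevIn S j) (hpjs : prevIn S j ≠ s)
    (hpnotK : ∀ i ∈ T, prevIn S i ∉ K)
    (hpp : ∀ i ∈ T, i ≠ j → prevIn (S.erase j) i = prevIn S i)
    (hpj : ∀ i ∈ T, i ≠ j → prevIn S i ≠ j) :
    (KT S K T).erase s = KT (S.erase j) (K.erase j) (insert s (T.erase j)) := by
  ext z
  simp only [Finset.mem_erase, mem_KT, Finset.mem_insert]
  constructor
  · rintro ⟨hzs, ⟨hzK, hzT⟩ | ⟨i, hiT, rfl⟩⟩
    · have hzj : z ≠ j := fun hc => hzT (hc ▸ hjT)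
      refine Or.inl ⟨⟨hzj, hzK⟩, ?_⟩
      rintro (rfl | hzT')
      · exact hzs rfl
      · exact hzT hzT'.2
    · by_cases hij : i = j
      · subst hij
        exact Or.inr ⟨s, Or.inl rfl, hps'⟩
      · exact Or.inr ⟨i, Or.inr ⟨hij, hiT⟩, hpp i hiT hij⟩
  · rintro (⟨⟨hzj, hzK⟩, hzT'⟩ | ⟨i, hi, rfl⟩)
    · have hzs : z ≠ s := fun hc => hzT' (Or.inl hc)
      have hzT : z ∉ T := fun hc => hzT' (Or.inr ⟨hzj, hc⟩)
      exact ⟨hzs, Or.inl ⟨hzK, hzT⟩⟩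
    · rcases hi with rfl | hiT'
      · rw [hps']
        exact ⟨hpjs, Or.inr ⟨j, hjT, rfl⟩⟩
      · obtain ⟨hij, hiT⟩ := hiT'
        rw [hpp i hiT hij]
        refine ⟨fun hc => hpnotK i hiT (hc ▸ hsK), Or.inr ⟨i, hiT, rfl⟩⟩

lemma KT_pair {S K T : Finset (Fin n)} {m : Fin n} (hmK : m ∈ K) (hmT : m ∉ T)
    (hpmK : prevIn S m ∉ K) (hpnotK : ∀ i ∈ T, prevIn S i ∉ K)
    (hinj : ∀ i ∈ T, prevIn S i ≠ prevIn S m) :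
    (KT S K T).erase m = (KT S K (insert m T)).erase (prevIn S m) := by
  ext z
  simp only [Finset.mem_erase, mem_KT, Finset.mem_insert]
  constructor
  · rintro ⟨hzm, ⟨hzK, hzT⟩ | ⟨i, hiT, rfl⟩⟩
    · refine ⟨fun hc => hpmK (hc ▸ hzK), Or.inl ⟨hzK, ?_⟩⟩
      rintro (rfl | h)
      · exact hzm rfl
      · exact hzT h
    · exact ⟨hinj i hiT, Or.inr ⟨i, Or.inr hiT, rfl⟩⟩
  · rintro ⟨hzpm, ⟨hzK, hzT⟩ | ⟨i, hi, rfl⟩⟩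
    · exact ⟨fun hc => hzT (Or.inl hc), Or.inl ⟨hzK, fun hc => hzT (Or.inr hc)⟩⟩
    · rcases hi with rfl | hiT
      · exact absurd rfl hzpm
      · exact ⟨fun hc => hpnotK i hiT (hc ▸ hmK), Or.inr ⟨i, hiT, rfl⟩⟩
lemma no_third {S : Finset (Fin n)} {i j z : Fin n} (hjS : j ∈ S) (_hiS : i ∈ S)
    (hij : i ≠ j) (hpi : prevIn S i = j) (hpj : prevIn S j = i) (hzS : z ∈ S) :
    z = i ∨ z = j := by
  by_contra hcon
  push_neg at hcon
  obtain ⟨hzi, hzj⟩ := hcon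
  obtain ⟨_, _, hj3⟩ := prevIn_mem_max (x := j) ⟨z, hzS, hzj⟩
  obtain ⟨_, _, hi3⟩ := prevIn_mem_max (x := i) ⟨j, hjS, Ne.symm hij⟩
  rw [hpi] at hi3
  rw [hpj] at hj3
  have h1 := hj3 z hzS hzj
  have h2 := hi3 z hzS hzi
  have h3 := dist_antisymm hij
  have h4 := dist_add_or z j i
  have := dpos hzj
  have := dpos hzi
  have := dist_lt z i
  have := dist_lt z j
  have := dist_lt i j
  have := dist_lt j i
  omega

lemma IP_A {S K : Finset (Fin n)} {j : Fin n} (hKS : K ⊆ S) (hjS : j ∈ S)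
    (hjK : j ∈ K) (hpjK : prevIn S j ∈ K) :
    initPts (S.erase j) (K.erase j) = initPts S K := by
  ext i
  simp only [mem_initPts, Finset.mem_erase]
  constructor
  · rintro ⟨⟨hij, hiK⟩, hp⟩
    refine ⟨hiK, fun hpK => hp ?_⟩
    by_cases hpij : prevIn S i = j
    · -- prevIn S i = j, so j = prevIn S i ∈ K by hpK... but hpK : prevIn S i ∈ K
      -- we must show prevIn (S.erase j) i ∈ K.erase j
      by_cases hpj2 : prevIn S j = i
      · -- S.erase j = {i}
        have hsub : S.erase j = {i} := by
          apply Finset.Subset.antisymm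
          · intro z hz
            obtain ⟨hzj, hzS⟩ := Finset.mem_erase.mp hz
            rcases no_third hjS (hKS hiK) hij hpij hpj2 hzS with h | h
            · simp [h]
            · exact absurd h hzj
          · intro z hz
            rw [Finset.mem_singleton] at hz
            subst hz
            exact Finset.mem_erase.mpr ⟨hij, hKS hiK⟩
        rw [hsub, prevIn_singleton]
        exact ⟨hij, hiK⟩
      · have hpjmem : prevIn S j ∈ S := prevIn_mem ⟨j, hjS⟩
        have hpjj : prevIn S j ≠ j := (prevIn_mem_max (x := j) ⟨i, hKS hiK, hij⟩).2.1
        have hjump := prev_jump hjS (hKS hiK) hij hpij ⟨prevIn S j, hpjmem, hpj2, hpjj⟩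
        rw [hjump]
        exact ⟨hpjj, hpjK⟩
    · rw [prevIn_erase hjS (Ne.symm hij) hpij]
      exact ⟨hpij, hpK⟩
  · rintro ⟨hiK, hp⟩
    have hij : i ≠ j := by
      rintro rfl
      exact hp hpjK
    have hpij : prevIn S i ≠ j := by
      intro hc
      exact hp (hc ▸ hjK)
    rw [prevIn_erase hjS (Ne.symm hij) hpij]
    exact ⟨⟨hij, hiK⟩, fun hc => hp hc.2⟩

lemma IP_B1 {S K : Finset (Fin n)} {j : Fin n} (hKS : K ⊆ S) (hjS : j ∈ S)
    (hjK : j ∈ K) (hnos : ∀ x ∈ K.erase j, prevIn S x ≠ j) :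
    initPts (S.erase j) (K.erase j) = (initPts S K).erase j := by
  ext i
  simp only [mem_initPts, Finset.mem_erase]
  constructor
  · rintro ⟨⟨hij, hiK⟩, hp⟩
    have hpij : prevIn S i ≠ j := hnos i (Finset.mem_erase.mpr ⟨hij, hiK⟩)
    rw [prevIn_erase hjS (Ne.symm hij) hpij] at hp
    exact ⟨hij, hiK, fun hc => hp ⟨hpij, hc⟩⟩
  · rintro ⟨hij, hiK, hp⟩
    have hpij : prevIn S i ≠ j := hnos i (Finset.mem_erase.mpr ⟨hij, hiK⟩)
    rw [prevIn_erase hjS (Ne.symm hij) hpij]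
    exact ⟨⟨hij, hiK⟩, fun hc => hp hc.2⟩

lemma IP_B2 {S K : Finset (Fin n)} {j s : Fin n} (hKS : K ⊆ S) (hjS : j ∈ S)
    (hjK : j ∈ K) (hpjK : prevIn S j ∉ K) (hsK : s ∈ K) (hsj : s ≠ j)
    (hps : prevIn S s = j) :
    initPts (S.erase j) (K.erase j) = insert s ((initPts S K).erase j) := by
  have hpjS : prevIn S j ∈ S := prevIn_mem ⟨j, hjS⟩
  have hpjj : prevIn S j ≠ j := fun hc => hpjK (by rw [hc]; exact hjK)
  have hpjs : prevIn S j ≠ s := fun hc => hpjK (hc ▸ hsK)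
  ext i
  simp only [mem_initPts, Finset.mem_erase, Finset.mem_insert]
  by_cases his : i = s
  · subst his
    have hjump := prev_jump hjS (hKS hsK) hsj hps ⟨prevIn S j, hpjS, hpjs, hpjj⟩
    rw [hjump]
    constructor
    · intro _; exact Or.inl rfl
    · intro _; exact ⟨⟨hsj, hsK⟩, fun hc => hpjK hc.2⟩
  · constructor
    · rintro ⟨⟨hij, hiK⟩, hp⟩
      have hpij : prevIn S i ≠ j := by
        intro hc
        exact his (succ_unique hjS (hKS hiK) hij hc (hKS hsK) hsj hps)
      rw [prevIn_erase hjS (Ne.symm hij) hpij] at hp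
      exact Or.inr ⟨hij, hiK, fun hc => hp ⟨hpij, hc⟩⟩
    · rintro (rfl | ⟨hij, hiK, hp⟩)
      · exact absurd rfl his
      · have hpij : prevIn S i ≠ j := by
          intro hc
          exact his (succ_unique hjS (hKS hiK) hij hc (hKS hsK) hsj hps)
        rw [prevIn_erase hjS (Ne.symm hij) hpij]
        exact ⟨⟨hij, hiK⟩, fun hc => hp hc.2⟩
lemma prev_inj' {S : Finset (Fin n)} {a b : Fin n} (ha : a ∈ S) (hb : b ∈ S)
    (hab : a ≠ b) (h : prevIn S a = prevIn S b) : a = b := by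
  have hw : prevIn S a ∈ S := prevIn_mem ⟨a, ha⟩
  have hwa : prevIn S a ≠ a := (prevIn_mem_max (x := a) ⟨b, hb, Ne.symm hab⟩).2.1
  have hwb : prevIn S b ≠ b := (prevIn_mem_max (x := b) ⟨a, ha, hab⟩).2.1
  exact succ_unique hw ha (Ne.symm hwa) rfl hb (by rw [h]; exact Ne.symm hwb) h.symm

lemma term_eq_A {S K T : Finset (Fin n)} {j : Fin n} (hKS : K ⊆ S) (hjS : j ∈ S)
    (hjK : j ∈ K) (hT : T ⊆ initPts S K) (hjT : j ∉ T) :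
    bdSet j (KT S K T) = KT (S.erase j) (K.erase j) T := by
  have hjKT : j ∈ KT S K T := mem_KT.mpr (Or.inl ⟨hjK, hjT⟩)
  rw [bdSet, nextIn_self hjKT]
  apply KT_erase_j hjT hjK
  · intro i hi
    have := (mem_initPts.mp (hT hi)).2
    exact fun hc => this (hc ▸ hjK)
  · intro i hi
    have hiI := hT hi
    have hpi := (mem_initPts.mp hiI).2
    have hij : j ≠ i := fun hc => hjT (hc ▸ hi)
    exact prevIn_erase hjS hij (fun hc => hpi (hc ▸ hjK))

lemma sign_pair (c : ℕ) (v : Finset (Fin n) → ℝ) :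
    ((-1 : ℝ) ^ (1 + c)) • v + ((-1 : ℝ) ^ (1 + (c + 1))) • v = 0 := by
  have h : ((-1 : ℝ) ^ (1 + (c + 1))) = -(((-1 : ℝ)) ^ (1 + c)) := by
    rw [show 1 + (c+1) = (1+c)+1 from by omega, pow_succ]
    ring
  rw [h, neg_smul]
  abel

theorem step_lemma (L K : Finset (Fin n)) (j : Fin n)
    (hjL : j ∉ L) (hKL : K ⊆ Finset.univ \ L) :
    bdMap L j (LElt L K) =
      if j ∈ K then LElt (insert j L) (K.erase j) else 0 := by
  have hLE : ∀ (L' K0 : Finset (Fin n)), LElt L' K0 =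
      ∑ T ∈ (initPts (Finset.univ \ L') K0).powerset,
        ((-1 : ℝ) ^ (1 + T.card)) • betaV L' (KT (Finset.univ \ L') K0 T) :=
    fun _ _ => rfl
  set S := (Finset.univ \ L : Finset (Fin n)) with hSdef
  have hjS : j ∈ S := Finset.mem_sdiff.mpr ⟨Finset.mem_univ j, hjL⟩
  have hKS : K ⊆ S := hKL
  have hIK : initPts S K ⊆ K := Finset.filter_subset _ _
  have hfroz0 : betaV (insert j L) (∅ : Finset (Fin n)) = 0 := by
    apply betaV_frozen
    apply frozen_empty (j := j)
    simp
  rw [bdMap_LElt L j hjL K]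
  by_cases hjK : j ∈ K
  · rw [if_pos hjK]
    rw [hLE, compl_insert]
    have hpjprops : ∀ i ∈ initPts S K, prevIn S i ∉ K := fun i hi => (mem_initPts.mp hi).2
    by_cases hA : prevIn S j ∈ K
    · -- Case A
      have hjI : j ∉ initPts S K := fun hc => (mem_initPts.mp hc).2 hA
      rw [IP_A hKS hjS hjK hA]
      apply Finset.sum_congr rfl
      intro T hT
      rw [Finset.mem_powerset] at hT
      have hjT : j ∉ T := fun hc => hjI (hT hc)
      rw [term_eq_A hKS hjS hjK hT hjT]
    · -- Case B
      have hjI : j ∈ initPts S K := mem_initPts.mpr ⟨hjK, hA⟩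
      have hI : initPts S K = insert j ((initPts S K).erase j) :=
        (Finset.insert_erase hjI).symm
      rw [hI, Finset.sum_powerset_insert (Finset.notMem_erase j _)]
      have hpart1 : ∀ T ∈ ((initPts S K).erase j).powerset,
          ((-1 : ℝ) ^ (1 + T.card)) • betaV (insert j L) (bdSet j (KT S K T)) =
          ((-1 : ℝ) ^ (1 + T.card)) • betaV (insert j L) (KT (S.erase j) (K.erase j) T) := by
        intro T hT
        rw [Finset.mem_powerset] at hT
        have hjT : j ∉ T := fun hc => (Finset.notMem_erase j _) (hT hc)
        rw [term_eq_A hKS hjS hjK (hT.trans (Finset.erase_subset _ _)) hjT]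
      by_cases hB2 : ∃ s ∈ K.erase j, prevIn S s = j
      · -- Case B2
        obtain ⟨s, hsKe, hps⟩ := hB2
        obtain ⟨hsj, hsK⟩ := Finset.mem_erase.mp hsKe
        have hsI : s ∉ initPts S K := fun hc => (mem_initPts.mp hc).2 (hps ▸ hjK)
        have hsIe : s ∉ (initPts S K).erase j := fun hc => hsI (Finset.mem_of_mem_erase hc)
        rw [IP_B2 hKS hjS hjK hA hsK hsj hps, Finset.sum_powerset_insert hsIe]
        congr 1
        · exact Finset.sum_congr rfl hpart1
        · apply Finset.sum_congr rfl
          intro T hT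
          rw [Finset.mem_powerset] at hT
          have hjT : j ∉ T := fun hc => (Finset.notMem_erase j _) (hT hc)
          have hsT : s ∉ T := fun hc => hsIe (hT hc)
          have hTI : T ⊆ initPts S K := hT.trans (Finset.erase_subset _ _)
          have hT0I : insert j T ⊆ initPts S K := Finset.insert_subset hjI hTI
          have hcards : (insert j T).card = T.card + 1 := Finset.card_insert_of_notMem hjT
          have hcards2 : (insert s T).card = T.card + 1 := Finset.card_insert_of_notMem hsT
          -- nextIn computation : the removed element is s
          have hnext : nextIn (KT S K (insert j T)) j = s := by
            have := nextIn_KT (T := insert j T) (m := s) hKS hjS hT0I hsK (Ne.symm hsj)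
              (fun z hz hzj => csucc_min hjS (hKS hsK) hsj hps z (hKS hz) hzj)
              (fun _ => Finset.mem_insert_self j _)
            rwa [if_neg (by simp [hsj, hsT])] at this
          rw [bdSet, hnext]
          -- identify the sets
          have hpjS : prevIn S j ∈ S := prevIn_mem ⟨j, hjS⟩
          have hpjj : prevIn S j ≠ j := fun hc => hA (by rw [hc]; exact hjK)
          have hpjs : prevIn S j ≠ s := fun hc => hA (hc ▸ hsK)
          have hjump : prevIn (S.erase j) s = prevIn S j :=
            prev_jump hjS (hKS hsK) hsj hps ⟨prevIn S j, hpjS, hpjs, hpjj⟩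
          have hset : (KT S K (insert j T)).erase s =
              KT (S.erase j) (K.erase j) (insert s T) := by
            have h := KT_B2 (T := insert j T) (Finset.mem_insert_self j T) hsK hsj
              (by simp [hsj, hsT]) hjump hpjs
              (fun i hi => by
                rcases Finset.mem_insert.mp hi with rfl | hi'
                · exact hA
                · exact hpjprops i (hTI hi'))
              (fun i hi hij => by
                have hi' : i ∈ T := by
                  rcases Finset.mem_insert.mp hi with rfl | h'
                  · exact absurd rfl hij
                  · exact h'
                exact prevIn_erase hjS (Ne.symm hij)
                  (fun hc => hpjprops i (hTI hi') (hc ▸ hjK)))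
              (fun i hi hij => by
                have hi' : i ∈ T := by
                  rcases Finset.mem_insert.mp hi with rfl | h'
                  · exact absurd rfl hij
                  · exact h'
                exact fun hc => hpjprops i (hTI hi') (hc ▸ hjK))
            rw [h, Finset.erase_insert hjT]
          rw [hset, hcards, hcards2]
      · -- Case B1
        push_neg at hB2
        rw [IP_B1 hKS hjS hjK hB2]
        have hpart2 : ∑ T ∈ ((initPts S K).erase j).powerset,
            ((-1 : ℝ) ^ (1 + (insert j T).card)) •
              betaV (insert j L) (bdSet j (KT S K (insert j T))) = 0 := by
          rcases (K.erase j).eq_empty_or_nonempty with hKe | hKne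
          · -- K = {j}
            have hIe : (initPts S K).erase j = ∅ := by
              apply Finset.eq_empty_of_forall_notMem
              intro x hx
              obtain ⟨hxj, hxI⟩ := Finset.mem_erase.mp hx
              have : x ∈ K.erase j := Finset.mem_erase.mpr ⟨hxj, hIK hxI⟩
              rw [hKe] at this
              exact absurd this (Finset.notMem_empty x)
            rw [hIe, Finset.powerset_empty, Finset.sum_singleton]
            have hKj : K = {j} := by
              ext z
              constructor
              · intro hz
                by_cases hzj : z = j
                · simp [hzj]
                · exact absurd (hKe ▸ Finset.mem_erase.mpr ⟨hzj, hz⟩) (Finset.notMem_empty z)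
              · intro hz
                rw [Finset.mem_singleton] at hz
                exact hz ▸ hjK
            have hKT : KT S K (insert j (∅ : Finset (Fin n))) = {prevIn S j} := by
              ext z
              rw [mem_KT]
              simp only [Finset.mem_insert, Finset.notMem_empty, or_false,
                Finset.mem_singleton, hKj]
              constructor
              · rintro (⟨hz1, hz2⟩ | ⟨i, rfl, rfl⟩)
                · exact absurd hz1 hz2
                · rfl
              · rintro rfl
                exact Or.inr ⟨j, rfl, rfl⟩
            rw [hKT]
            have hb : bdSet j {prevIn S j} = ∅ := by
              rw [bdSet, nextIn_eq_of (Finset.mem_singleton_self (prevIn S j))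
                (fun z hz => by rw [Finset.mem_singleton] at hz; rw [hz])]
              simp
            rw [hb, hfroz0, smul_zero]
          · -- K' nonempty : cancellation via i2
            obtain ⟨hi2K', hi2min⟩ := nextIn_mem_min (j := j) hKne
            set i2 := nextIn (K.erase j) j with hi2def
            obtain ⟨hi2j, hi2K⟩ := Finset.mem_erase.mp hi2K'
            have hmin : ∀ z ∈ K, z ≠ j → (i2 - j).val ≤ (z - j).val :=
              fun z hz hzj => hi2min z (Finset.mem_erase.mpr ⟨hzj, hz⟩)
            have hpi2K : prevIn S i2 ∉ K := by
              intro hc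
              have hpi2j : prevIn S i2 ≠ j := hB2 i2 hi2K'
              have h0 : (j - j).val < (i2 - j).val := by
                rw [dist_self']; exact dpos hi2j
              have h1 := (prev_lt_of hjS (Ne.symm hi2j) hjS (Ne.symm hi2j) h0).2
              have h2 := hmin (prevIn S i2) hc hpi2j
              omega
            have hi2I : i2 ∈ (initPts S K).erase j :=
              Finset.mem_erase.mpr ⟨hi2j, mem_initPts.mpr ⟨hi2K, hpi2K⟩⟩
            -- the pairing
            have key : ∀ T ⊆ (initPts S K).erase j, i2 ∉ T →
                bdSet j (KT S K (insert j T)) =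
                bdSet j (KT S K (insert j (insert i2 T))) := by
              intro T hT hi2T
              have hjT : j ∉ T := fun hc => (Finset.notMem_erase j _) (hT hc)
              have hTI : T ⊆ initPts S K := hT.trans (Finset.erase_subset _ _)
              have hT0I : insert j T ⊆ initPts S K := Finset.insert_subset hjI hTI
              have hT1I : insert j (insert i2 T) ⊆ initPts S K := by
                rw [Finset.insert_comm]
                exact Finset.insert_subset (Finset.mem_of_mem_erase hi2I) hT0I
              have hi2T0 : i2 ∉ insert j T := by simp [hi2j, hi2T]
              have hn0 : nextIn (KT S K (insert j T)) j = i2 := by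
                have := nextIn_KT (T := insert j T) (m := i2) hKS hjS hT0I hi2K
                  (Ne.symm hi2j) hmin (fun _ => Finset.mem_insert_self j _)
                rwa [if_neg hi2T0] at this
              have hn1 : nextIn (KT S K (insert j (insert i2 T))) j = prevIn S i2 := by
                have := nextIn_KT (T := insert j (insert i2 T)) (m := i2) hKS hjS hT1I hi2K
                  (Ne.symm hi2j) hmin (fun _ => Finset.mem_insert_self j _)
                rwa [if_pos (by simp)] at this
              rw [bdSet, bdSet, hn0, hn1]
              have : insert j (insert i2 T) = insert i2 (insert j T) := Finset.insert_comm _ _ _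
              rw [this]
              apply KT_pair hi2K hi2T0 hpi2K
              · intro i hi
                rcases Finset.mem_insert.mp hi with rfl | hi'
                · exact hA
                · exact hpjprops i (hTI hi')
              · intro i hi hc
                have hii2 : i ≠ i2 := fun hc2 => hi2T0 (hc2 ▸ hi)
                have hiS : i ∈ S := by
                  rcases Finset.mem_insert.mp hi with rfl | hi'
                  · exact hjS
                  · exact hKS (hIK (hTI hi'))
                exact hii2 (prev_inj' hiS (hKS hi2K) hii2 hc)
            have hpair : ∀ T ⊆ (initPts S K).erase j, i2 ∉ T →
                ((-1 : ℝ) ^ (1 + (insert j T).card)) •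
                  betaV (insert j L) (bdSet j (KT S K (insert j T))) +
                ((-1 : ℝ) ^ (1 + (insert j (insert i2 T)).card)) •
                  betaV (insert j L) (bdSet j (KT S K (insert j (insert i2 T)))) = 0 := by
              intro T hT hi2T
              have hjT : j ∉ T := fun hc => (Finset.notMem_erase j _) (hT hc)
              have hc1 : (insert j T).card = T.card + 1 :=
                Finset.card_insert_of_notMem hjT
              have hc2 : (insert j (insert i2 T)).card = T.card + 2 := by
                rw [Finset.card_insert_of_notMem (by simp [Ne.symm hi2j, hjT]),
                  Finset.card_insert_of_notMem hi2T]
              rw [← key T hT hi2T, hc1, hc2]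
              exact sign_pair _ _
            refine Finset.sum_involution
              (fun T _ => if i2 ∈ T then T.erase i2 else insert i2 T) ?_ ?_
              (fun T hT => ?_) ?_
            · -- sums to zero
              intro T hT
              rw [Finset.mem_powerset] at hT
              by_cases hi2T : i2 ∈ T
              · rw [if_pos hi2T]
                have hT' : T.erase i2 ⊆ (initPts S K).erase j :=
                  (Finset.erase_subset _ _).trans hT
                have := hpair (T.erase i2) hT' (Finset.notMem_erase _ _)
                rw [Finset.insert_erase hi2T] at this
                rw [add_comm]
                exact this
              · rw [if_neg hi2T]
                exact hpair T hT hi2T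
            · -- g T ≠ T
              intro T _ _
              by_cases hi2T : i2 ∈ T
              · rw [if_pos hi2T]
                intro hc
                rw [← hc] at hi2T
                exact Finset.notMem_erase i2 T hi2T
              · rw [if_neg hi2T]
                intro hc
                exact hi2T (hc ▸ Finset.mem_insert_self i2 T)
            · -- g maps into the powerset
              rw [Finset.mem_powerset] at *
              by_cases hi2T : i2 ∈ T
              · rw [if_pos hi2T]
                exact (Finset.erase_subset _ _).trans hT
              · rw [if_neg hi2T]
                exact Finset.insert_subset hi2I hT
            · -- involutive
              intro T _
              by_cases hi2T : i2 ∈ T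
              · simp only [if_pos hi2T, Finset.notMem_erase, if_neg]
                exact Finset.insert_erase hi2T
              · simp only [if_neg hi2T, Finset.mem_insert_self, if_pos]
                exact Finset.erase_insert hi2T
        rw [hpart2, add_zero]
        exact Finset.sum_congr rfl hpart1
  · -- Case C : j ∉ K
    rw [if_neg hjK]
    rcases K.eq_empty_or_nonempty with rfl | hKne
    · have hI : initPts S (∅ : Finset (Fin n)) = ∅ := by
        simp [initPts]
      rw [hI, Finset.powerset_empty, Finset.sum_singleton]
      have h1 : KT S (∅ : Finset (Fin n)) ∅ = ∅ := by
        simp [KT]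
      rw [h1]
      have h2 : bdSet j (∅ : Finset (Fin n)) = ∅ := by
        simp [bdSet]
      rw [h2, hfroz0, smul_zero]
    · set m := nextIn K j with hmdef
      obtain ⟨hmK, hmmin⟩ := nextIn_mem_min (j := j) hKne
      have hjm : j ≠ m := fun hc => hjK (hc ▸ hmK)
      have hmin : ∀ z ∈ K, z ≠ j → (m - j).val ≤ (z - j).val := fun z hz _ => hmmin z hz
      have hpmK : prevIn S m ∉ K := by
        intro hc
        have hpmj : prevIn S m ≠ j := fun hcc => hjK (hcc ▸ hc)
        have h0 : (j - j).val < (m - j).val := by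
          rw [dist_self']; exact dpos (Ne.symm hjm)
        have h1 := (prev_lt_of hjS hjm hjS hjm h0).2
        have h2 := hmin (prevIn S m) hc hpmj
        omega
      have hmI : m ∈ initPts S K := mem_initPts.mpr ⟨hmK, hpmK⟩
      have hpjprops : ∀ i ∈ initPts S K, prevIn S i ∉ K := fun i hi => (mem_initPts.mp hi).2
      have key : ∀ T ⊆ initPts S K, m ∉ T →
          bdSet j (KT S K T) = bdSet j (KT S K (insert m T)) := by
        intro T hT hmT
        have hT1 : insert m T ⊆ initPts S K := Finset.insert_subset hmI hT
        have hn0 : nextIn (KT S K T) j = m := by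
          have := nextIn_KT (T := T) (m := m) hKS hjS hT hmK hjm hmin
            (fun hc => absurd hc hjK)
          rwa [if_neg hmT] at this
        have hn1 : nextIn (KT S K (insert m T)) j = prevIn S m := by
          have := nextIn_KT (T := insert m T) (m := m) hKS hjS hT1 hmK hjm hmin
            (fun hc => absurd hc hjK)
          rwa [if_pos (Finset.mem_insert_self m T)] at this
        rw [bdSet, bdSet, hn0, hn1]
        apply KT_pair hmK hmT hpmK (fun i hi => hpjprops i (hT hi))
        intro i hi hc
        have him : i ≠ m := fun hc2 => hmT (hc2 ▸ hi)
        exact him (prev_inj' (hKS (hIK (hT hi))) (hKS hmK) him hc)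
      have hpair : ∀ T ⊆ initPts S K, m ∉ T →
          ((-1 : ℝ) ^ (1 + T.card)) • betaV (insert j L) (bdSet j (KT S K T)) +
          ((-1 : ℝ) ^ (1 + (insert m T).card)) •
            betaV (insert j L) (bdSet j (KT S K (insert m T))) = 0 := by
        intro T hT hmT
        have hc2 : (insert m T).card = T.card + 1 := Finset.card_insert_of_notMem hmT
        rw [← key T hT hmT, hc2]
        exact sign_pair _ _
      refine Finset.sum_involution
        (fun T _ => if m ∈ T then T.erase m else insert m T) ?_ ?_
        (fun T hT => ?_) ?_
      · intro T hT
        rw [Finset.mem_powerset] at hT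
        by_cases hmT : m ∈ T
        · rw [if_pos hmT]
          have hT' : T.erase m ⊆ initPts S K := (Finset.erase_subset _ _).trans hT
          have := hpair (T.erase m) hT' (Finset.notMem_erase _ _)
          rw [Finset.insert_erase hmT] at this
          rw [add_comm]
          exact this
        · rw [if_neg hmT]
          exact hpair T hT hmT
      · intro T _ _
        by_cases hmT : m ∈ T
        · rw [if_pos hmT]
          intro hc
          rw [← hc] at hmT
          exact Finset.notMem_erase m T hmT
        · rw [if_neg hmT]
          intro hc
          exact hmT (hc ▸ Finset.mem_insert_self m T)
      · rw [Finset.mem_powerset] at *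
        by_cases hmT : m ∈ T
        · rw [if_pos hmT]
          exact (Finset.erase_subset _ _).trans hT
        · rw [if_neg hmT]
          exact Finset.insert_subset hmI hT
      · intro T _
        by_cases hmT : m ∈ T
        · simp only [if_pos hmT, Finset.notMem_erase, if_neg]
          exact Finset.insert_erase hmT
        · simp only [if_neg hmT, Finset.mem_insert_self, if_pos]
          exact Finset.erase_insert hmT
lemma bdComp_zero (js : List (Fin n)) : ∀ (L : Finset (Fin n)),
    bdComp L js (0 : Finset (Fin n) → ℝ) = 0 := by
  induction js with
  | nil => intro L; rfl
  | cons j tl ih =>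
    intro L
    show bdComp (insert j L) tl (bdMap L j 0) = 0
    rw [bdMap_zero]
    exact ih _

lemma bdComp_LElt (js : List (Fin n)) : ∀ (L J : Finset (Fin n)), js.Nodup →
    (∀ x ∈ js, x ∉ L) → (∀ x ∈ J, x ∉ L) →
    bdComp L js (LElt L J) =
      if js.toFinset ⊆ J then LElt (L ∪ js.toFinset) (J \ js.toFinset) else 0 := by
  induction js with
  | nil =>
    intro L J _ _ _
    simp only [List.toFinset_nil, Finset.empty_subset, if_pos, Finset.union_empty,
      Finset.sdiff_empty]
    rfl
  | cons j tl ih =>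
    intro L J hnd hjsL hJL
    have hjL : j ∉ L := hjsL j List.mem_cons_self
    have hJS : J ⊆ Finset.univ \ L := fun x hx =>
      Finset.mem_sdiff.mpr ⟨Finset.mem_univ x, hJL x hx⟩
    have hjtl : j ∉ tl := (List.nodup_cons.mp hnd).1
    have htlnd : tl.Nodup := (List.nodup_cons.mp hnd).2
    show bdComp (insert j L) tl (bdMap L j (LElt L J)) = _
    rw [step_lemma L J j hjL hJS]
    by_cases hjJ : j ∈ J
    · rw [if_pos hjJ]
      rw [ih (insert j L) (J.erase j) htlnd
        (fun x hx => by
          simp only [Finset.mem_insert, not_or]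
          exact ⟨fun hc => hjtl (hc ▸ hx), hjsL x (List.mem_cons_of_mem j hx)⟩)
        (fun x hx => by
          obtain ⟨hxj, hxJ⟩ := Finset.mem_erase.mp hx
          simp only [Finset.mem_insert, not_or]
          exact ⟨hxj, hJL x hxJ⟩)]
      have hcond : (tl.toFinset ⊆ J.erase j) ↔ ((j :: tl).toFinset ⊆ J) := by
        simp only [List.toFinset_cons, Finset.insert_subset_iff]
        constructor
        · intro h
          exact ⟨hjJ, fun x hx => Finset.mem_of_mem_erase (h hx)⟩
        · intro h x hx
          refine Finset.mem_erase.mpr ⟨?_, h.2 hx⟩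
          intro hc
          exact hjtl (hc ▸ List.mem_toFinset.mp hx)
      by_cases hc : tl.toFinset ⊆ J.erase j
      · rw [if_pos hc, if_pos (hcond.mp hc)]
        have e1 : insert j L ∪ tl.toFinset = L ∪ (j :: tl).toFinset := by
          simp only [List.toFinset_cons]
          ext x
          simp only [Finset.mem_union, Finset.mem_insert]
          tauto
        have e2 : (J.erase j) \ tl.toFinset = J \ (j :: tl).toFinset := by
          simp only [List.toFinset_cons]
          ext x
          simp only [Finset.mem_sdiff, Finset.mem_erase, Finset.mem_insert, not_or]
          tauto
        rw [e1, e2]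
      · rw [if_neg hc, if_neg (fun hcc => hc (hcond.mpr hcc))]
    · rw [if_neg hjJ, bdComp_zero]
      rw [if_neg]
      intro hc
      apply hjJ
      apply hc
      simp only [List.toFinset_cons]
      exact Finset.mem_insert_self j _

end Aux

/-- for a `k`-subset `J` and `L = {ℓ_1 < ⋯ < ℓ_d}` with `1 ≤ d ≤ k−1`:
`(∂_{ℓ_1} ∘ ⋯ ∘ ∂_{ℓ_d})(𝓛_J) = 𝓛^{(L)}_{J∖L}` if `L ⊆ J`, and `= 0` otherwise.
(The composition applies `∂_{ℓ_d}` first, so the list of indices is reversed.) -/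
theorem stmt13 {n k : ℕ} (hk : 2 ≤ k) (hkn : k ≤ n - 1)
    (J : Finset (Fin n)) (hJ : J.card = k)
    (L : Finset (Fin n)) (hd1 : 1 ≤ L.card) (hd2 : L.card ≤ k - 1) :
    bdComp ∅ ((L.sort (· ≤ ·)).reverse) (LElt ∅ J) =
      if L ⊆ J then LElt L (J \ L) else 0 := by
  have hnd : ((L.sort (· ≤ ·)).reverse).Nodup :=
    List.nodup_reverse.mpr (L.sort_nodup (· ≤ ·))
  have htf : ((L.sort (· ≤ ·)).reverse).toFinset = L := by
    rw [List.toFinset_reverse, Finset.sort_toFinset]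
  have h := bdComp_LElt ((L.sort (· ≤ ·)).reverse) ∅ J hnd
    (fun x _ => Finset.notMem_empty x) (fun x _ => Finset.notMem_empty x)
  rw [htf, Finset.empty_union] at h
  exact h
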